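/- Let φ₁, …, φₙ be linear maps from F₂^m to F₂², where m = n + k and 1 ≤ k ≤ n, such that the intersection of their kernels is {0}. Then there exist indices i₁, …, i_k such that the map F₂^m → (F₂²)^k sending v to (φ_{i₁}(v), …, φ_{i_k}(v)) is surjective. -/

import Mathlib

open Module Submodule

section aux

variable {F V : Type*} [Field F] [AddCommGroup V] [Module F V] [FiniteDimensional F V]

lemma aux_count {n : ℕ} (K : Fin n → Submodule F V) (D : Submodule F V)
    (T : Finset (Fin n)) :
    finrank F D ≤ finrank F ↥(D ⊓ T.inf K) +
      ∑ i ∈ T, (finrank F D - finrank F ↥(D ⊓ K i)) := by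
  induction T using Finset.induction with
  | empty => simpa using Submodule.finrank_mono (le_inf le_rfl (Finset.le_inf fun _ h => absurd h (Finset.notMem_empty _)) : D ≤ D ⊓ (∅ : Finset (Fin n)).inf K)
  | @insert a T ha ih =>
    rw [Finset.inf_insert, Finset.sum_insert ha, inf_inf_distrib_left]
    have key := Submodule.finrank_sup_add_finrank_inf_eq (D ⊓ K a) (D ⊓ T.inf K)
    have h1 : finrank F ↥((D ⊓ K a) ⊔ (D ⊓ T.inf K)) ≤ finrank F ↥D :=
      Submodule.finrank_mono (sup_le inf_le_left inf_le_left)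
    have h2 : finrank F ↥(D ⊓ K a) ≤ finrank F ↥D := Submodule.finrank_mono inf_le_left
    omega

end aux

lemma greedy (n k : ℕ) (hkn : k ≤ n)
    (φ : Fin n → ((Fin (n + k) → ZMod 2) →ₗ[ZMod 2] (Fin 2 → ZMod 2)))
    (hker : (⨅ i : Fin n, LinearMap.ker (φ i)) = ⊥) :
    ∀ s, s ≤ k → ∃ ι : Fin s → Fin n, Function.Injective ι ∧
      finrank (ZMod 2) ↥(⨅ j, LinearMap.ker (φ (ι j))) = n + k - 2*s := by
  have hV : finrank (ZMod 2) (Fin (n + k) → ZMod 2) = n + k := by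
    simp [Module.finrank_pi]
  have hK : ∀ i, finrank (ZMod 2) ↥(LinearMap.ker (φ i)) + 2 ≥ n + k := by
    intro i
    have h1 := LinearMap.finrank_range_add_finrank_ker (φ i)
    have h2 : finrank (ZMod 2) ↥(LinearMap.range (φ i)) ≤ 2 := by
      have := Submodule.finrank_le (LinearMap.range (φ i))
      simpa [Module.finrank_pi] using this
    rw [hV] at h1
    omega
  have hdrop : ∀ (A : Submodule (ZMod 2) (Fin (n + k) → ZMod 2)) (i : Fin n),
      finrank (ZMod 2) ↥(A ⊓ LinearMap.ker (φ i)) + 2 ≥ finrank (ZMod 2) ↥A := by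
    intro A i
    have key := Submodule.finrank_sup_add_finrank_inf_eq A (LinearMap.ker (φ i))
    have h1 := Submodule.finrank_le (A ⊔ LinearMap.ker (φ i))
    rw [hV] at h1
    have := hK i
    omega
  intro s
  induction s with
  | zero =>
    intro _
    refine ⟨Fin.elim0, fun a => a.elim0, ?_⟩
    rw [iInf_of_empty]
    simpa [finrank_top] using hV
  | succ s ih =>
    intro hs
    obtain ⟨ι, hinj, hrank⟩ := ih (by omega)
    set D := ⨅ j, LinearMap.ker (φ (ι j)) with hD
    have hclaim : ∃ i, i ∉ Set.range ι ∧
        finrank (ZMod 2) ↥(D ⊓ LinearMap.ker (φ i)) = n + k - 2*(s+1) := by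
      by_contra hcon
      push_neg at hcon
      classical
      set R : Finset (Fin n) := Finset.image ι Finset.univ with hR
      have hcardR : R.card = s := by
        rw [hR, Finset.card_image_of_injective _ hinj, Finset.card_univ, Fintype.card_fin]
      have hsum0 : ∑ i ∈ R, (finrank (ZMod 2) ↥D - finrank (ZMod 2) ↥(D ⊓ LinearMap.ker (φ i))) = 0 := by
        apply Finset.sum_eq_zero
        intro i hiR
        obtain ⟨j, _, rfl⟩ := Finset.mem_image.mp hiR
        have : D ⊓ LinearMap.ker (φ (ι j)) = D := inf_eq_left.mpr (iInf_le _ j)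
        rw [this]
        omega
      have hsum1 : ∑ i ∈ Rᶜ, (finrank (ZMod 2) ↥D - finrank (ZMod 2) ↥(D ⊓ LinearMap.ker (φ i))) ≤ Rᶜ.card := by
        refine (Finset.sum_le_card_nsmul _ _ 1 ?_).trans (by simp)
        intro i hiRc
        have hnr : i ∉ Set.range ι := by
          intro ⟨j, hj⟩
          exact (Finset.mem_compl.mp hiRc) (Finset.mem_image.mpr ⟨j, Finset.mem_univ j, hj⟩)
        have hne := hcon i hnr
        have hd := hdrop D i
        omega
      have hsumtot : ∑ i, (finrank (ZMod 2) ↥D - finrank (ZMod 2) ↥(D ⊓ LinearMap.ker (φ i))) ≤ n - s := by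
        rw [← Finset.sum_add_sum_compl R]
        have := Finset.card_compl R (α := Fin n)
        rw [Fintype.card_fin] at this
        omega
      have hmain := aux_count (fun i => LinearMap.ker (φ i)) D Finset.univ
      have hbot : D ⊓ Finset.univ.inf (fun i => LinearMap.ker (φ i)) = ⊥ := by
        have : Finset.univ.inf (fun i => LinearMap.ker (φ i)) = ⊥ := by
          rw [Finset.inf_eq_iInf]
          simpa using hker
        rw [this, inf_bot_eq]
      rw [hbot, finrank_bot] at hmain
      omega
    obtain ⟨i, hnr, hir⟩ := hclaim
    refine ⟨Fin.cons i ι, Fin.cons_injective_of_injective hnr hinj, ?_⟩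
    have hinf : (⨅ j : Fin (s+1), LinearMap.ker (φ ((Fin.cons i ι : Fin (s+1) → Fin n) j)))
        = LinearMap.ker (φ i) ⊓ D := by
      apply le_antisymm
      · refine le_inf (iInf_le_of_le 0 (by simp)) (le_iInf fun j => iInf_le_of_le j.succ (by simp))
      · refine le_iInf fun j => ?_
        refine Fin.cases ?_ (fun j' => ?_) j
        · simp
        · simpa using inf_le_right.trans (iInf_le _ j')
    rw [hinf, inf_comm]
    exact hir

/-- Let `φ₁, …, φₙ` be `F₂`-linear maps from `F₂^m` to `F₂²`, where
`m = n + k` and `1 ≤ k ≤ n`, whose kernels intersect trivially. Then there exist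
(distinct) indices `i₁, …, i_k` such that `v ↦ (φ_{i₁}(v), …, φ_{i_k}(v))` is surjective. -/
theorem linearalgebrasurj (n k : ℕ) (hk1 : 1 ≤ k) (hkn : k ≤ n)
    (φ : Fin n → ((Fin (n + k) → ZMod 2) →ₗ[ZMod 2] (Fin 2 → ZMod 2)))
    (hker : (⨅ i : Fin n, LinearMap.ker (φ i)) = ⊥) :
    ∃ ι : Fin k → Fin n, Function.Injective ι ∧
      Function.Surjective
        (fun v : Fin (n + k) → ZMod 2 => (fun j : Fin k => φ (ι j) v)) := by
  obtain ⟨ι, hinj, hrank⟩ := greedy n k hkn φ hker k le_rfl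
  refine ⟨ι, hinj, ?_⟩
  set ψ := LinearMap.pi (fun j : Fin k => φ (ι j)) with hψ
  have hkerψ : LinearMap.ker ψ = ⨅ j, LinearMap.ker (φ (ι j)) := LinearMap.ker_pi _
  have hV : finrank (ZMod 2) (Fin (n + k) → ZMod 2) = n + k := by
    simp [Module.finrank_pi]
  have hcod : finrank (ZMod 2) (Fin k → Fin 2 → ZMod 2) = 2 * k := by
    rw [Module.finrank_pi_fintype]
    simp [Module.finrank_pi, mul_comm]
  have hrn := LinearMap.finrank_range_add_finrank_ker ψ
  rw [hV, hkerψ, hrank] at hrn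
  have hrange : LinearMap.range ψ = ⊤ := by
    apply Submodule.eq_top_of_finrank_eq
    rw [hcod]
    omega
  have hsurj : Function.Surjective ψ := LinearMap.range_eq_top.mp hrange
  exact hsurj
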